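/- Let n ≥ 1 and let w : ℝ → ℝ be measurable with ∫ |λ|^j |w(λ)| dλ < ∞ for 0 ≤ j ≤ 2n−1, and set m_j := ∫ λ^j w(λ) dλ. Assume D_n := det( m_{i+j−2} )_{i,j=1,…,n} ≠ 0, and define P_n(λ) := det( λ·m_{i+j−2} − m_{i+j−1} )_{i,j=1,…,n} / D_n. Then P_n is a monic polynomial of degree n satisfying the orthogonality relations ∫ P_n(λ) λ^l w(λ) dλ = 0 for all 0 ≤ l ≤ n−1. (This is the determinant formula for the monic orthogonal polynomials of the one-matrix model.) -/

import Mathlib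

open MeasureTheory Matrix

theorem stmt4 (n : ℕ) (hn : 1 ≤ n) (w : ℝ → ℝ) (hw : Measurable w)
    (hint : ∀ j : ℕ, j ≤ 2 * n - 1 →
      Integrable (fun x : ℝ => |x| ^ j * |w x|))
    (m : ℕ → ℝ) (hm : ∀ j, m j = ∫ x : ℝ, x ^ j * w x)
    (D : ℝ) (hD : D = Matrix.det (Matrix.of fun i j : Fin n => m ((i : ℕ) + (j : ℕ))))
    (hD0 : D ≠ 0)
    (P : ℝ → ℝ)
    (hP : ∀ x, P x = Matrix.det (Matrix.of fun i j : Fin n =>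
      x * m ((i : ℕ) + (j : ℕ)) - m ((i : ℕ) + (j : ℕ) + 1)) / D) :
    (∃ p : Polynomial ℝ, p.Monic ∧ p.natDegree = n ∧ ∀ x, p.eval x = P x) ∧
      (∀ l : ℕ, l ≤ n - 1 → ∫ x : ℝ, P x * x ^ l * w x = 0) := by
  classical
  set A : Matrix (Fin n) (Fin n) ℝ := Matrix.of (fun i j : Fin n => m ((i : ℕ) + (j : ℕ))) with hA
  set B : Matrix (Fin n) (Fin n) ℝ := Matrix.of (fun i j : Fin n => m ((i : ℕ) + (j : ℕ) + 1)) with hB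
  have hdetA : A.det = D := hD.symm
  have hAu : IsUnit A.det := by rw [hdetA]; exact isUnit_iff_ne_zero.mpr hD0
  set C : Matrix (Fin n) (Fin n) ℝ := B * A⁻¹ with hC
  have hCA : C * A = B := by
    rw [hC, Matrix.mul_assoc, Matrix.nonsing_inv_mul A hAu, Matrix.mul_one]
  set p : Polynomial ℝ := C.charpoly with hp
  have hmonic : p.Monic := C.charpoly_monic
  have hdeg : p.natDegree = n := by
    rw [hp, Matrix.charpoly_natDegree_eq_dim, Fintype.card_fin]
  have heval : ∀ x, p.eval x = P x := by
    intro x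
    have h1 : p.eval x = (x • (1 : Matrix (Fin n) (Fin n) ℝ) - C).det := by
      rw [hp, Matrix.charpoly]
      rw [show Polynomial.eval x (Matrix.charmatrix C).det
          = (Polynomial.evalRingHom x) (Matrix.charmatrix C).det from rfl,
        RingHom.map_det]
      congr 1
      ext i j
      by_cases hij : i = j
      · subst hij
        simp [Matrix.charmatrix_apply_eq, Matrix.one_apply]
      · simp [Matrix.charmatrix_apply_ne _ _ _ hij, Matrix.one_apply, hij]
    have h2 : (x • (1 : Matrix (Fin n) (Fin n) ℝ) - C) * A = x • A - B := by
      rw [Matrix.sub_mul, Matrix.smul_mul, Matrix.one_mul, hCA]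
    have h3 : (x • A - B) = Matrix.of (fun i j : Fin n =>
        x * m ((i : ℕ) + (j : ℕ)) - m ((i : ℕ) + (j : ℕ) + 1)) := by
      ext i j
      simp [hA, hB, Matrix.sub_apply, Matrix.smul_apply, smul_eq_mul]
    have h4 := congrArg Matrix.det h2
    rw [Matrix.det_mul, hdetA, h3, ← h1] at h4
    rw [hP, ← h4, mul_div_assoc, div_self hD0, mul_one]
  -- key algebraic identity
  have hCpow : ∀ k, k ≤ n → (C ^ k) *ᵥ (fun l : Fin n => m (l : ℕ))
      = fun l : Fin n => m ((l : ℕ) + k) := by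
    intro k hk
    induction k with
    | zero => simp [Matrix.one_mulVec]
    | succ k ih =>
      have hkn : k < n := hk
      have ih' := ih (le_of_lt hkn)
      rw [pow_succ', ← Matrix.mulVec_mulVec, ih']
      funext l
      have hBe : (C * A) l ⟨k, hkn⟩ = m ((l : ℕ) + k + 1) := by
        rw [hCA]; simp [hB]
      have : (C * A) l ⟨k, hkn⟩ = ∑ j, C l j * m ((j : ℕ) + k) := by
        simp [Matrix.mul_apply, hA]
      rw [this] at hBe
      simpa [Matrix.mulVec, dotProduct, add_assoc] using hBe
  have hsum : ∀ l : Fin n, ∑ k ∈ Finset.range (n + 1), p.coeff k * m (k + (l : ℕ)) = 0 := by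
    intro l
    have h2 : (Polynomial.aeval C) p = ∑ k ∈ Finset.range (n + 1), p.coeff k • C ^ k := by
      rw [Polynomial.aeval_eq_sum_range, hdeg]
    have h3 : (∑ k ∈ Finset.range (n + 1), p.coeff k • C ^ k) *ᵥ (fun l : Fin n => m (l : ℕ)) = 0 := by
      rw [← h2, hp, Matrix.aeval_self_charpoly, Matrix.zero_mulVec]
    have h4 : (∑ k ∈ Finset.range (n + 1), p.coeff k • ((C ^ k) *ᵥ (fun l : Fin n => m (l : ℕ)))) = 0 := by
      rw [← h3]
      funext i
      simp only [Finset.sum_apply, Pi.smul_apply, Matrix.mulVec, dotProduct,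
        Matrix.sum_apply, Matrix.smul_apply, smul_eq_mul, Finset.mul_sum, Finset.sum_mul,
        mul_assoc]
      rw [Finset.sum_comm]
    have h5 := congrFun h4 l
    simp only [Finset.sum_apply, Pi.smul_apply, smul_eq_mul, Pi.zero_apply] at h5
    rw [← h5]
    refine Finset.sum_congr rfl fun k hk => ?_
    rw [hCpow k (Nat.lt_succ_iff.mp (Finset.mem_range.mp hk))]
    ring_nf
  refine ⟨⟨p, hmonic, hdeg, heval⟩, ?_⟩
  intro l hl
  have hl' : l < n := by omega
  have hintg : ∀ j : ℕ, j ≤ 2 * n - 1 → Integrable (fun x : ℝ => x ^ j * w x) := by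
    intro j hj
    refine (hint j hj).mono' (((measurable_id.pow_const j).mul hw).aestronglyMeasurable) ?_
    filter_upwards with x
    rw [Real.norm_eq_abs, abs_mul, abs_pow]
  have hintk : ∀ k : ℕ, k ∈ Finset.range (n + 1) →
      Integrable (fun x : ℝ => p.coeff k * (x ^ (k + l) * w x)) := by
    intro k hk
    have hk' : k + l ≤ 2 * n - 1 := by
      have := Nat.lt_succ_iff.mp (Finset.mem_range.mp hk); omega
    exact (hintg (k + l) hk').const_mul _
  have hPx : ∀ x : ℝ, P x * x ^ l * w x
      = ∑ k ∈ Finset.range (n + 1), p.coeff k * (x ^ (k + l) * w x) := by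
    intro x
    rw [← heval, Polynomial.eval_eq_sum_range, hdeg, Finset.sum_mul, Finset.sum_mul]
    refine Finset.sum_congr rfl fun k _ => ?_
    rw [pow_add]; ring
  calc ∫ x : ℝ, P x * x ^ l * w x
      = ∫ x : ℝ, ∑ k ∈ Finset.range (n + 1), p.coeff k * (x ^ (k + l) * w x) := by
        exact integral_congr_ae (Filter.Eventually.of_forall hPx)
    _ = ∑ k ∈ Finset.range (n + 1), ∫ x : ℝ, p.coeff k * (x ^ (k + l) * w x) :=
        integral_finset_sum _ hintk
    _ = ∑ k ∈ Finset.range (n + 1), p.coeff k * m (k + l) := by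
        refine Finset.sum_congr rfl fun k _ => ?_
        rw [integral_const_mul, ← hm]
    _ = 0 := by
        have := hsum ⟨l, hl'⟩
        simpa using this
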